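/- arXiv:1510.05162 — 4 statements merged into one kernel-verified Lean document; each statement's English description precedes it below -/
import Mathlib

section
/- Let V be a memorizing valuation algebra. Then for all formulas x, y and all H ∈ V: x/(y • x • H) = x/H and x • y • x • H = y • x • H. -/
/-- Formulas over a set of atoms `A`: x ::= T | a | ¬x | x ∧ y. -/
inductive Fm (A : Type) : Type where
  | tru : Fm A
  | atom : A → Fm A
  | neg : Fm A → Fm A
  | con : Fm A → Fm A → Fm A

/-- Trees over `A`: X ::= T | F | X ⊴ a ⊵ X. -/
inductive Tr (A : Type) : Type where
  | tt : Tr A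
  | ff : Tr A
  | node : Tr A → A → Tr A → Tr A

namespace Tr

/-- The substitution X[T ↦ Y, F ↦ Z]. -/
def subst {A : Type} : Tr A → Tr A → Tr A → Tr A
  | tt, Y, _ => Y
  | ff, _, Z => Z
  | node l a r, Y, Z => node (subst l Y Z) a (subst r Y Z)

/-- All leaves of the tree are T. -/
def closedT {A : Type} : Tr A → Prop
  | tt => True
  | ff => False
  | node l _ r => closedT l ∧ closedT r

/-- All leaves of the tree are F. -/
def closedF {A : Type} : Tr A → Prop
  | tt => False
  | ff => True
  | node l _ r => closedF l ∧ closedF r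

/-- A tree is open if it is neither closed by T nor closed by F. -/
def IsOpen {A : Type} (X : Tr A) : Prop := ¬ closedT X ∧ ¬ closedF X

/-- The tree has at least one T leaf. -/
def hasT {A : Type} : Tr A → Prop
  | tt => True
  | ff => False
  | node l _ r => hasT l ∨ hasT r

/-- The tree has at least one F leaf. -/
def hasF {A : Type} : Tr A → Prop
  | tt => False
  | ff => True
  | node l _ r => hasF l ∨ hasF r

end Tr

/-- A formula is constant-free if it contains no occurrence of T. -/
def Fm.constFree {A : Type} : Fm A → Prop
  | .tru => False
  | .atom _ => True
  | .neg x => x.constFree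
  | .con x y => x.constFree ∧ y.constFree

/-- The short-circuit evaluation tree of a formula. -/
def se {A : Type} : Fm A → Tr A
  | .tru => .tt
  | .atom a => .node .tt a .ff
  | .neg x => (se x).subst .ff .tt
  | .con x y => (se x).subst (se y) .ff

/-- A valuation algebra: a nonempty set of valuations together with an
evaluation `/ : 𝒜 × V → Bool` and a derivative `• : 𝒜 × V → V`. -/
structure ValAlg (A : Type) : Type 1 where
  V : Type
  nonempty : Nonempty V
  eval : A → V → Bool
  deriv : A → V → V

namespace ValAlg

variable {A : Type}

/-- Simultaneous extension of evaluation and derivative to formulas: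
`ev u x H = (x/H, x•H)`. -/
def ev (u : ValAlg A) : Fm A → u.V → Bool × u.V
  | .tru, H => (true, H)
  | .atom a, H => (u.eval a H, u.deriv a H)
  | .neg x, H => ((u.ev x H).1.not, (u.ev x H).2)
  | .con x y, H => if (u.ev x H).1 then u.ev y (u.ev x H).2 else (false, (u.ev x H).2)

/-- The evaluation `x/H` of a formula. -/
def fEval (u : ValAlg A) (x : Fm A) (H : u.V) : Bool := (u.ev x H).1

/-- The derivative `x•H` of a formula. -/
def fDeriv (u : ValAlg A) (x : Fm A) (H : u.V) : u.V := (u.ev x H).2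

/-- Repetition-proof valuation algebra: a/(a•H) = a/H. -/
def RepProof (u : ValAlg A) : Prop :=
  ∀ a H, u.eval a (u.deriv a H) = u.eval a H

/-- Contractive: repetition-proof and a•a•H = a•H. -/
def Contractive (u : ValAlg A) : Prop :=
  u.RepProof ∧ ∀ a H, u.deriv a (u.deriv a H) = u.deriv a H

/-- Memorizing: contractive and a/(b•a•H) = a/H, a•b•a•H = b•a•H. -/
def Memorizing (u : ValAlg A) : Prop :=
  u.Contractive ∧
    (∀ a b H, u.eval a (u.deriv b (u.deriv a H)) = u.eval a H) ∧
    (∀ a b H, u.deriv a (u.deriv b (u.deriv a H)) = u.deriv b (u.deriv a H))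

/-- Static: memorizing and a/(b•H) = a/H. -/
def Static (u : ValAlg A) : Prop :=
  u.Memorizing ∧ ∀ a b H, u.eval a (u.deriv b H) = u.eval a H

end ValAlg

/-- Valuation congruence with respect to a valuation algebra. -/
def VCongr {A : Type} (u : ValAlg A) (x y : Fm A) : Prop :=
  ∀ H : u.V, u.fEval x H = u.fEval y H ∧ u.fDeriv x H = u.fDeriv y H

/-- Satisfiability w.r.t. all valuation algebras. -/
def SATfr {A : Type} (x : Fm A) : Prop :=
  ∃ u : ValAlg A, ∃ H : u.V, u.fEval x H = true

/-- Satisfiability w.r.t. repetition-proof valuation algebras. -/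
def SATrp {A : Type} (x : Fm A) : Prop :=
  ∃ u : ValAlg A, u.RepProof ∧ ∃ H : u.V, u.fEval x H = true

/-- Satisfiability w.r.t. contractive valuation algebras. -/
def SATcn {A : Type} (x : Fm A) : Prop :=
  ∃ u : ValAlg A, u.Contractive ∧ ∃ H : u.V, u.fEval x H = true

/-- Satisfiability w.r.t. memorizing valuation algebras. -/
def SATmem {A : Type} (x : Fm A) : Prop :=
  ∃ u : ValAlg A, u.Memorizing ∧ ∃ H : u.V, u.fEval x H = true

/-- Satisfiability w.r.t. static valuation algebras. -/
def SATst {A : Type} (x : Fm A) : Prop :=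
  ∃ u : ValAlg A, u.Static ∧ ∃ H : u.V, u.fEval x H = true

/-- A valuation path: a finite sequence of pairs in 𝒜 × {T, F}. -/
abbrev VPath (A : Type) := List (A × Bool)

/-- The (partial) result `P : X` of a valuation path on a tree. -/
def result {A : Type} [DecidableEq A] : VPath A → Tr A → Option Bool
  | [], .tt => some true
  | [], .ff => some false
  | (u, b) :: Q, .node X₁ a X₂ =>
      if u = a then (if b then result Q X₁ else result Q X₂) else none
  | _ :: _, .tt => none
  | _ :: _, .ff => none
  | [], .node _ _ _ => none

/-- A path is repetition-proof if equal adjacent atoms carry equal values. -/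
def RepProofPath {A : Type} : VPath A → Prop
  | (u, b) :: (v, c) :: t => (u = v → b = c) ∧ RepProofPath ((v, c) :: t)
  | _ => True

/-- A path is memorizing if equal atoms anywhere carry equal values. -/
def MemPath {A : Type} (P : VPath A) : Prop :=
  ∀ u b c, (u, b) ∈ P → (u, c) ∈ P → b = c

/-- Free path-satisfiability. -/
def PathSatFr {A : Type} [DecidableEq A] (x : Fm A) : Prop :=
  ∃ P : VPath A, result P (se x) = some true

/-- Rp-path-satisfiability. -/
def PathSatRp {A : Type} [DecidableEq A] (x : Fm A) : Prop :=
  ∃ P : VPath A, RepProofPath P ∧ result P (se x) = some true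

/-- Mem-path-satisfiability. -/
def PathSatMem {A : Type} [DecidableEq A] (x : Fm A) : Prop :=
  ∃ P : VPath A, MemPath P ∧ result P (se x) = some true

/-- Free path-falsifiability. -/
def PathFalFr {A : Type} [DecidableEq A] (x : Fm A) : Prop :=
  ∃ P : VPath A, result P (se x) = some false

/-- The evaluation path `x ⋄ H`. -/
def ValAlg.epath {A : Type} (u : ValAlg A) : Fm A → u.V → VPath A
  | .tru, _ => []
  | .atom a, H => [(a, u.eval a H)]
  | .neg x, H => u.epath x H
  | .con x y, H =>
      if u.fEval x H then u.epath x H ++ u.epath y (u.fDeriv x H) else u.epath x H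

/-- `lastIdx a P k` is the largest 1-based index `i ≤ min k |P|` with `uᵢ = a`,
or 0 if no such index exists. -/
def lastIdx {A : Type} [DecidableEq A] (a : A) (P : VPath A) : ℕ → ℕ
  | 0 => 0
  | k + 1 => if P[k]?.map Prod.fst = some a then k + 1 else lastIdx a P k

/-- The norm-based constructor `va`; the valuation `i : Fin (|P| + 1)`
represents the 1-based valuation `i + 1` of the paper. -/
def va {A : Type} [DecidableEq A] (P : VPath A) : ValAlg A where
  V := Fin (P.length + 1)
  nonempty := ⟨0⟩
  eval a i :=
    match lastIdx a P (i.1 + 1) with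
    | 0 => false
    | j + 1 => (P[j]?.map Prod.snd).getD false
  deriv a i :=
    if h : i.1 < P.length ∧ P[i.1]?.map Prod.fst = some a
    then ⟨i.1 + 1, by omega⟩ else i

/-- Helper for contraction: `cnAux a Q` drops leading repetitions of `a`. -/
def cnAux {A : Type} [DecidableEq A] : A → VPath A → VPath A
  | _, [] => []
  | a, (u, b) :: Q => if u = a then cnAux a Q else (u, b) :: cnAux u Q

/-- The contraction of a valuation path. -/
def cn {A : Type} [DecidableEq A] : VPath A → VPath A
  | [] => []
  | (u, b) :: Q => (u, b) :: cnAux u Q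

/-- The norm-based constructor `sva`, a trivial valuation algebra. -/
def sva {A : Type} [DecidableEq A] (P : VPath A) : ValAlg A where
  V := PUnit
  nonempty := ⟨PUnit.unit⟩
  eval a _ := decide ((a, true) ∈ P)
  deriv _ H := H

namespace ValAlg

variable {A : Type}

/-- Reachability from a valuation by applying atomic derivatives. -/
inductive Reach (u : ValAlg A) : u.V → u.V → Prop
  | refl (G : u.V) : Reach u G G
  | step {G G' : u.V} (b : A) : Reach u G G' → Reach u G (u.deriv b G')

lemma reach_trans (u : ValAlg A) {G₁ G₂ G₃ : u.V} (h : u.Reach G₁ G₂)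
    (h' : u.Reach G₂ G₃) : u.Reach G₁ G₃ := by
  induction h' with
  | refl => exact h
  | step b _ ih => exact .step b ih

lemma reach_fDeriv (u : ValAlg A) (y : Fm A) {G G' : u.V} (h : u.Reach G G') :
    u.Reach G (u.fDeriv y G') := by
  induction y generalizing G' with
  | tru => exact h
  | atom a => exact .step a h
  | neg x ih => exact ih h
  | con x y ihx ihy =>
      simp only [fDeriv, ev]
      split
      · exact ihy (ihx h)
      · exact ihx h

lemma mem_main (u : ValAlg A) (hu : u.Memorizing) (x : Fm A) (H : u.V) :
    ∀ G, u.Reach (u.fDeriv x H) G → u.fEval x G = u.fEval x H ∧ u.fDeriv x G = G := by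
  obtain ⟨⟨hrp, hcn⟩, hme, hmd⟩ := hu
  induction x generalizing H with
  | tru => intro G _; exact ⟨rfl, rfl⟩
  | atom a =>
      intro G hG
      simp only [fDeriv, fEval, ev] at *
      induction hG with
      | refl => exact ⟨hrp a H, hcn a H⟩
      | step b _ ih =>
          obtain ⟨he, hd⟩ := ih
          constructor
          · rw [← hd, hme, he]
          · rw [← hd, hmd, hd]
  | neg x ih =>
      intro G hG
      simp only [fDeriv, fEval, ev] at *
      obtain ⟨he, hd⟩ := ih H G hG
      exact ⟨by rw [show (u.ev x G).1 = (u.ev x H).1 from he], hd⟩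
  | con x y ihx ihy =>
      intro G hG
      simp only [fDeriv, fEval, ev] at *
      by_cases hx : (u.ev x H).1
      · simp only [hx, if_true] at hG
        have hG' : u.Reach (u.ev x H).2 G :=
          u.reach_trans (u.reach_fDeriv y (.refl _)) hG
        obtain ⟨hex, hdx⟩ := ihx H G hG'
        obtain ⟨hey, hdy⟩ := ihy (u.ev x H).2 G hG
        rw [hex, hx]
        simp only [hx, if_true]
        rw [show (u.ev x G).2 = G from hdx]
        exact ⟨hey, hdy⟩
      · simp only [hx, if_false] at hG ⊢
        simp only [Bool.not_eq_true] at hx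
        obtain ⟨hex, hdx⟩ := ihx H G hG
        rw [hex, hx]
        simp [hdx]

end ValAlg

/-- In a memorizing valuation algebra, `x/(y•x•H) = x/H` and
`x•y•x•H = y•x•H` for all formulas `x`, `y` and all valuations `H`. -/
theorem stmt_3 {A : Type} (u : ValAlg A) (hu : u.Memorizing) (x y : Fm A) (H : u.V) :
    u.fEval x (u.fDeriv y (u.fDeriv x H)) = u.fEval x H ∧
    u.fDeriv x (u.fDeriv y (u.fDeriv x H)) = u.fDeriv y (u.fDeriv x H) := by
  exact u.mem_main hu x H _ (u.reach_fDeriv y (.refl _))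
end

section
/- Let x be a formula. Then SAT_st(x) holds if and only if there exists an assignment α : 𝒜 → {T, F} such that x, evaluated as a propositional formula under α (that is, x evaluated in the trivial valuation algebra with a/H = α(a) and a•H = H), is true. -/
/-- Trivial valuation algebra from an assignment. -/
def trivAlg {A : Type} (α : A → Bool) : ValAlg A :=
  ValAlg.mk PUnit ⟨PUnit.unit⟩ (fun a _ => α a) (fun _ H => H)

lemma static_key {A : Type} (u : ValAlg A) (hu : u.Static) (α : A → Bool) :
    ∀ (x : Fm A) (H : u.V), (∀ a, u.eval a H = α a) →
      (u.ev x H).1 = ((trivAlg α).ev x PUnit.unit).1 ∧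
      (∀ a, u.eval a (u.ev x H).2 = α a) := by
  intro x
  induction x with
  | tru => intro H h; exact ⟨rfl, h⟩
  | atom a =>
      intro H h
      refine ⟨h a, fun b => ?_⟩
      simp only [ValAlg.ev]
      rw [hu.2 b a H, h b]
  | neg x ih =>
      intro H h
      obtain ⟨h1, h2⟩ := ih H h
      constructor
      · simp only [ValAlg.ev, h1]
      · exact h2
  | con x y ihx ihy =>
      intro H h
      obtain ⟨h1, h2⟩ := ihx H h
      simp only [ValAlg.ev, h1]
      by_cases hb : ((trivAlg α).ev x PUnit.unit).1 = true
      · simp only [hb, if_true]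
        exact ihy _ h2
      · simp only [Bool.not_eq_true] at hb
        simp only [hb, Bool.false_eq_true, if_false]
        exact ⟨by simp, h2⟩

lemma triv_static {A : Type} (α : A → Bool) : (trivAlg α).Static := by
  refine ⟨⟨⟨fun a H => rfl, fun a H => rfl⟩, fun a b H => rfl, fun a b H => rfl⟩,
    fun a b H => rfl⟩

/-- `SAT_st x` iff there is an assignment `α : 𝒜 → Bool` such that
`x` is true in the trivial valuation algebra with `a/H = α a` and `a•H = H`. -/
theorem stmt_8 {A : Type} (x : Fm A) :
    SATst x ↔ ∃ α : A → Bool,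
      (ValAlg.mk PUnit ⟨PUnit.unit⟩ (fun a _ => α a) (fun _ H => H)).fEval x
        PUnit.unit = true := by
  constructor
  · rintro ⟨u, hu, H, hH⟩
    refine ⟨fun a => u.eval a H, ?_⟩
    have := (static_key u hu (fun a => u.eval a H) x H (fun a => rfl)).1
    show ((trivAlg fun a => u.eval a H).ev x PUnit.unit).1 = true
    exact this ▸ hH
  · rintro ⟨α, hα⟩
    exact ⟨trivAlg α, triv_static α, PUnit.unit, hα⟩
end

section
/- If x is a constant-free formula, then both PathSat_fr(x) and PathFal_fr(x) hold. -/
theorem result_subst {A : Type} [DecidableEq A] (X : Tr A) (P Q : VPath A)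
    (Y Z : Tr A) (b : Bool) (h : result P X = some b) :
    result (P ++ Q) (X.subst Y Z) = result Q (if b then Y else Z) := by
  induction X generalizing P with
  | tt =>
    cases P with
    | nil => simp [result] at h; subst h; simp [Tr.subst]
    | cons p t => cases p; simp [result] at h
  | ff =>
    cases P with
    | nil => simp [result] at h; subst h; simp [Tr.subst]
    | cons p t => cases p; simp [result] at h
  | node l a r ihl ihr =>
    cases P with
    | nil => simp [result] at h
    | cons p t =>
      obtain ⟨u, c⟩ := p
      by_cases hu : u = a
      · subst hu
        cases c with
        | true =>
          simp [result] at h ⊢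
          simpa [Tr.subst, result] using ihl t h
        | false =>
          simp [result] at h ⊢
          simpa [Tr.subst, result] using ihr t h
      · simp [result, hu] at h

theorem stmt_13_aux {A : Type} [DecidableEq A] (x : Fm A) (hx : x.constFree) :
    (∃ P : VPath A, result P (se x) = some true) ∧
    (∃ P : VPath A, result P (se x) = some false) := by
  induction x with
  | tru => exact absurd hx (by simp [Fm.constFree])
  | atom a =>
    constructor
    · exact ⟨[(a, true)], by simp [se, result]⟩
    · exact ⟨[(a, false)], by simp [se, result]⟩
  | neg x ih =>
    obtain ⟨⟨P, hP⟩, ⟨Q, hQ⟩⟩ := ih hx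
    constructor
    · refine ⟨Q ++ [], ?_⟩
      rw [se, result_subst _ _ _ _ _ _ hQ]; simp [result]
    · refine ⟨P ++ [], ?_⟩
      rw [se, result_subst _ _ _ _ _ _ hP]; simp [result]
  | con x y ihx ihy =>
    obtain ⟨hx1, hx2⟩ := hx
    obtain ⟨⟨P, hP⟩, ⟨Q, hQ⟩⟩ := ihx hx1
    obtain ⟨⟨R, hR⟩, ⟨S, hS⟩⟩ := ihy hx2
    constructor
    · refine ⟨P ++ R, ?_⟩
      rw [se, result_subst _ _ _ _ _ _ hP]; simpa using hR
    · refine ⟨Q ++ [], ?_⟩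
      rw [se, result_subst _ _ _ _ _ _ hQ]; simp [result]

/-- A constant-free formula is both path-satisfiable and
path-falsifiable. -/
theorem stmt_13 {A : Type} [DecidableEq A] (x : Fm A) (hx : x.constFree) :
    PathSatFr x ∧ PathFalFr x := stmt_13_aux x hx
end

section
/- Let V be a valuation algebra, x a formula and H ∈ V. If V is repetition-proof, then the evaluation path x ⋄ H is a repetition-proof valuation path; if V is memorizing, then x ⋄ H is a memorizing valuation path. -/
section Aux
variable {A : Type} (u : ValAlg A)

lemma fDeriv_con_true {x y : Fm A} {H : u.V} (h : u.fEval x H = true) :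
    u.fDeriv (.con x y) H = u.fDeriv y (u.fDeriv x H) := by
  simp only [ValAlg.fDeriv, ValAlg.fEval, ValAlg.ev] at *
  simp [h]

lemma fDeriv_con_false {x y : Fm A} {H : u.V} (h : u.fEval x H = false) :
    u.fDeriv (.con x y) H = u.fDeriv x H := by
  simp only [ValAlg.fDeriv, ValAlg.fEval, ValAlg.ev] at *
  simp [h]

lemma epath_nil_deriv : ∀ (x : Fm A) (H : u.V), u.epath x H = [] → u.fDeriv x H = H := by
  intro x
  induction x with
  | tru => intro H _; rfl
  | atom a => intro H h; simp [ValAlg.epath] at h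
  | neg x ih => intro H h; exact ih H h
  | con x y ihx ihy =>
    intro H h
    simp only [ValAlg.epath] at h
    by_cases hx : u.fEval x H = true
    · rw [if_pos hx] at h
      rcases List.append_eq_nil_iff.mp h with ⟨h1, h2⟩
      have hd := ihx H h1
      rw [fDeriv_con_true u hx, hd]
      rw [hd] at h2
      exact ihy H h2
    · rw [if_neg hx] at h
      rw [fDeriv_con_false u (by simpa using hx)]
      exact ihx H h

lemma epath_head : ∀ (x : Fm A) (H : u.V) (a : A) (c : Bool),
    (u.epath x H).head? = some (a, c) → u.eval a H = c := by
  intro x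
  induction x with
  | tru => intro H a c h; simp [ValAlg.epath] at h
  | atom d => intro H a c h; simp [ValAlg.epath] at h; rw [← h.1]; exact h.2
  | neg x ih => exact ih
  | con x y ihx ihy =>
    intro H a c h
    simp only [ValAlg.epath] at h
    by_cases hx : u.fEval x H = true
    · rw [if_pos hx] at h
      rcases hp : u.epath x H with _ | ⟨p, P⟩
      · rw [hp] at h; simp at h
        have := epath_nil_deriv u x H hp
        rw [this] at h
        exact ihy H a c h
      · rw [hp] at h; simp at h
        exact ihx H a c (by rw [hp]; simpa using h)
    · rw [if_neg hx] at h
      exact ihx H a c h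

lemma epath_last (hu : u.RepProof) : ∀ (x : Fm A) (H : u.V) (a : A) (b : Bool),
    (u.epath x H).getLast? = some (a, b) → u.eval a (u.fDeriv x H) = b := by
  intro x
  induction x with
  | tru => intro H a b h; simp [ValAlg.epath] at h
  | atom d =>
    intro H a b h
    simp [ValAlg.epath] at h
    rw [← h.1, ← h.2]
    show u.eval d (u.deriv d H) = _
    exact hu d H
  | neg x ih => exact ih
  | con x y ihx ihy =>
    intro H a b h
    simp only [ValAlg.epath] at h
    by_cases hx : u.fEval x H = true
    · rw [if_pos hx] at h
      rw [fDeriv_con_true u hx]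
      rcases hq : u.epath y (u.fDeriv x H) with _ | ⟨q, Q⟩
      · rw [hq, List.append_nil] at h
        rw [epath_nil_deriv u y _ hq]
        exact ihx H a b h
      · rw [hq, List.getLast?_append_cons] at h
        exact ihy _ a b (by rw [hq]; exact h)
    · rw [if_neg hx] at h
      rw [fDeriv_con_false u (by simpa using hx)]
      exact ihx H a b h

lemma rp_append : ∀ (P Q : VPath A), RepProofPath P → RepProofPath Q →
    (∀ a b c, P.getLast? = some (a, b) → Q.head? = some (a, c) → b = c) →
    RepProofPath (P ++ Q) := by
  intro P
  induction P with
  | nil => intro Q _ hQ _; simpa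
  | cons p P ih =>
    intro Q hP hQ hjoin
    rcases P with _ | ⟨p2, P⟩
    · rcases Q with _ | ⟨q, Q⟩
      · simpa
      · refine ⟨fun huv => ?_, hQ⟩
        have hqq : q = (p.1, q.2) := Prod.ext_iff.mpr ⟨huv.symm, rfl⟩
        exact hjoin p.1 p.2 q.2 (by simp) (by rw [List.head?_cons, hqq])
    · have hP' : RepProofPath (p2 :: P) := hP.2
      refine ⟨hP.1, ih Q hP' hQ ?_⟩
      intro a b c hl hh
      exact hjoin a b c (by simpa using hl) hh

lemma epath_rp (hu : u.RepProof) : ∀ (x : Fm A) (H : u.V), RepProofPath (u.epath x H) := by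
  intro x
  induction x with
  | tru => intro H; trivial
  | atom a => intro H; trivial
  | neg x ih => exact ih
  | con x y ihx ihy =>
    intro H
    simp only [ValAlg.epath]
    by_cases hx : u.fEval x H = true
    · rw [if_pos hx]
      apply rp_append _ _ (ihx H) (ihy _)
      intro a b c hl hh
      have h1 := epath_last u hu x H a b hl
      have h2 := epath_head u y (u.fDeriv x H) a c hh
      rw [h1] at h2; exact h2
    · rw [if_neg hx]; exact ihx H

lemma mem_good (hu : u.Memorizing) : ∀ (y : Fm A) (K : u.V) (a : A),
    u.deriv a K = K →
    u.deriv a (u.fDeriv y K) = u.fDeriv y K ∧ u.eval a (u.fDeriv y K) = u.eval a K := by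
  obtain ⟨⟨hrp, _⟩, hev, hdr⟩ := hu
  intro y
  induction y with
  | tru => intro K a h; exact ⟨h, rfl⟩
  | atom b =>
    intro K a h
    constructor
    · show u.deriv a (u.deriv b K) = u.deriv b K
      conv_lhs => rw [← h]
      rw [hdr, h]
    · show u.eval a (u.deriv b K) = u.eval a K
      calc u.eval a (u.deriv b K) = u.eval a (u.deriv b (u.deriv a K)) := by rw [h]
        _ = u.eval a K := hev a b K
  | neg x ih => exact ih
  | con x y ihx ihy =>
    intro K a h
    by_cases hx : u.fEval x K = true
    · rw [fDeriv_con_true u hx]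
      obtain ⟨g1, e1⟩ := ihx K a h
      obtain ⟨g2, e2⟩ := ihy (u.fDeriv x K) a g1
      exact ⟨g2, e2.trans e1⟩
    · rw [fDeriv_con_false u (by simpa using hx)]
      exact ihx K a h

lemma epath_mem (hu : u.Memorizing) : ∀ (x : Fm A) (H : u.V),
    (∀ a b, (a, b) ∈ u.epath x H →
      u.deriv a (u.fDeriv x H) = u.fDeriv x H ∧ u.eval a (u.fDeriv x H) = b) ∧
    MemPath (u.epath x H) := by
  intro x
  induction x with
  | tru =>
    intro H
    exact ⟨fun a b h => by simp [ValAlg.epath] at h,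
           fun a b c h1 _ => by simp [ValAlg.epath] at h1⟩
  | atom d =>
    intro H
    constructor
    · intro a b h
      simp only [ValAlg.epath, List.mem_singleton, Prod.mk.injEq] at h
      obtain ⟨rfl, rfl⟩ := h
      exact ⟨hu.1.2 _ H, hu.1.1 _ H⟩
    · intro a b c h1 h2
      simp [ValAlg.epath] at h1 h2
      rw [h1.2, h2.2]
  | neg x ih => exact ih
  | con x y ihx ihy =>
    intro H
    simp only [ValAlg.epath]
    by_cases hx : u.fEval x H = true
    · rw [if_pos hx]
      have key := (ihx H).1
      have key2 := (ihy (u.fDeriv x H)).1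
      have inv : ∀ a b, (a, b) ∈ u.epath x H ++ u.epath y (u.fDeriv x H) →
          u.deriv a (u.fDeriv (.con x y) H) = u.fDeriv (.con x y) H ∧
          u.eval a (u.fDeriv (.con x y) H) = b := by
        intro a b h
        rw [fDeriv_con_true u hx]
        rcases List.mem_append.mp h with h | h
        · obtain ⟨g, e⟩ := key a b h
          obtain ⟨g', e'⟩ := mem_good u hu y (u.fDeriv x H) a g
          exact ⟨g', e'.trans e⟩
        · exact key2 a b h
      refine ⟨fun a b h => by rw [fDeriv_con_true u hx] at inv ⊢; exact inv a b h, ?_⟩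
      intro a b c h1 h2
      have e1 := (inv a b h1).2
      have e2 := (inv a c h2).2
      rw [← e1, ← e2]
    · rw [if_neg hx]
      have := ihx H
      rw [fDeriv_con_false u (by simpa using hx)]
      exact this

end Aux

/-- If `V` is repetition-proof then `x ⋄ H` is repetition-proof;
if `V` is memorizing then `x ⋄ H` is memorizing. -/
theorem stmt_16 {A : Type} (u : ValAlg A) (x : Fm A) (H : u.V) :
    (u.RepProof → RepProofPath (u.epath x H)) ∧
    (u.Memorizing → MemPath (u.epath x H)) :=
  ⟨fun hu => epath_rp u hu x H, fun hu => (epath_mem u hu x H).2⟩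
end
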